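/- A sequence $(a_n)$ in a semigroup has a proper sumsequence if and only if it has a sumsequence $(b_n)$ such that $\bigcap_{n=1}^{\infty} FS(b_n, b_{n+1}, \dots) = \emptyset$. -/

import Mathlib

/-- The ordered sum `a_{i_1} + ⋯ + a_{i_m}` over a finite index set
`F = {i_1 < ⋯ < i_m}` (junk value `a 0` if `F = ∅`). -/
def ordsum {S : Type*} [AddSemigroup S] (a : ℕ → S) (F : Finset ℕ) : S :=
  match F.sort (· ≤ ·) with
  | [] => a 0
  | i :: l => l.foldl (fun s j => s + a j) (a i)

/-- `F < G`: every element of `F` is smaller than every element of `G`. -/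
def FinsetLT (F G : Finset ℕ) : Prop := ∀ i ∈ F, ∀ j ∈ G, i < j

/-- `FS(a_1, a_2, …)`: the set of all finite ordered sums of the sequence `a`. -/
def FSset {S : Type*} [AddSemigroup S] (a : ℕ → S) : Set S :=
  {s | ∃ F : Finset ℕ, F.Nonempty ∧ ordsum a F = s}

/-- `FS(a_n, a_{n+1}, …)`: finite ordered sums with all indices `≥ n`. -/
def FStail {S : Type*} [AddSemigroup S] (a : ℕ → S) (n : ℕ) : Set S :=
  {s | ∃ F : Finset ℕ, F.Nonempty ∧ (∀ i ∈ F, n ≤ i) ∧ ordsum a F = s}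

/-- A sequence is proper if `a_{F₁} ≠ a_{F₂}` whenever `F₁ < F₂`. -/
def IsProperSeq {S : Type*} [AddSemigroup S] (a : ℕ → S) : Prop :=
  ∀ F G : Finset ℕ, F.Nonempty → G.Nonempty → FinsetLT F G →
    ordsum a F ≠ ordsum a G

/-- `b` is a sumsequence of `a`: `b_k = a_{F_k}` for finite index sets `F₁ < F₂ < ⋯`. -/
def IsSumseq {S : Type*} [AddSemigroup S] (a b : ℕ → S) : Prop :=
  ∃ F : ℕ → Finset ℕ, (∀ k, (F k).Nonempty) ∧
    (∀ k, FinsetLT (F k) (F (k + 1))) ∧ (∀ k, b k = ordsum a (F k))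

/-! ### Auxiliary lemmas -/

lemma sort_map_of_strictMono (f : ℕ → ℕ) (hf : StrictMono f) (G : Finset ℕ) :
    (G.map ⟨f, hf.injective⟩).sort (· ≤ ·) = (G.sort (· ≤ ·)).map f := by
  refine (fun hp hs => List.Perm.eq_of_pairwise' (Finset.pairwise_sort _ _) hs hp) ?_ ?_
  · rw [← Multiset.coe_eq_coe, Finset.sort_eq, Finset.map_val,
      ← Finset.sort_eq G (· ≤ ·), Multiset.map_coe]
    rfl
  · exact List.Pairwise.map f (fun _ _ h => hf.monotone h) (Finset.pairwise_sort _ _)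

lemma ordsum_comp {S : Type*} [AddSemigroup S] (b : ℕ → S) (f : ℕ → ℕ)
    (hf : StrictMono f) (G : Finset ℕ) (hG : G.Nonempty) :
    ordsum (fun k => b (f k)) G = ordsum b (G.map ⟨f, hf.injective⟩) := by
  unfold ordsum
  rw [sort_map_of_strictMono f hf]
  rcases h : G.sort (· ≤ ·) with _ | ⟨i, l⟩
  · exfalso
    have heq := Finset.sort_eq G (· ≤ ·)
    rw [h] at heq
    have hval : G.val = 0 := by simpa using heq.symm
    have : G = ∅ := Finset.val_eq_zero.mp hval
    subst this
    exact absurd hG (by simp)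
  · simp [List.foldl_map]

lemma FStail_antitone {S : Type*} [AddSemigroup S] (b : ℕ → S) {n m : ℕ} (h : n ≤ m) :
    FStail b m ⊆ FStail b n := by
  rintro s ⟨F, hne, hge, hsum⟩
  exact ⟨F, hne, fun i hi => le_trans h (hge i hi), hsum⟩

lemma finsetLT_of_lt (H : ℕ → Finset ℕ) (hne : ∀ k, (H k).Nonempty)
    (hadj : ∀ k, FinsetLT (H k) (H (k + 1))) :
    ∀ k l, k < l → FinsetLT (H k) (H l) := by
  intro k l hkl
  induction l, hkl using Nat.le_induction with
  | base => exact hadj k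
  | succ l hl ih =>
    intro i hi j hj
    obtain ⟨t, ht⟩ := hne l
    exact lt_trans (ih i hi t ht) (hadj l t ht j hj)

lemma uniform_escape {S : Type*} [AddSemigroup S] (b : ℕ → S) (E : Finset S)
    (h : ∀ s ∈ E, ∃ n, s ∉ FStail b n) :
    ∃ n, ∀ s ∈ E, s ∉ FStail b n := by
  induction E using Finset.cons_induction with
  | empty => exact ⟨0, by simp⟩
  | cons x E hx ih =>
    obtain ⟨n, hn⟩ := ih (fun s hs => h s (Finset.mem_cons_of_mem hs))
    obtain ⟨m, hm⟩ := h x (Finset.mem_cons_self x E)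
    refine ⟨max n m, ?_⟩
    intro s hs hmem
    rcases Finset.mem_cons.mp hs with rfl | hs
    · exact hm (FStail_antitone b (le_max_right n m) hmem)
    · exact hn s hs (FStail_antitone b (le_max_left n m) hmem)

theorem stmt3 {S : Type*} [AddSemigroup S] (a : ℕ → S) :
    (∃ b : ℕ → S, IsSumseq a b ∧ IsProperSeq b) ↔
      (∃ b : ℕ → S, IsSumseq a b ∧ (⋂ n : ℕ, FStail b n) = ∅) := by
  constructor
  · rintro ⟨b, hss, hproper⟩
    refine ⟨b, hss, ?_⟩
    rw [Set.eq_empty_iff_forall_notMem]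
    intro s hs
    rw [Set.mem_iInter] at hs
    obtain ⟨F, hFne, -, hFsum⟩ := hs 0
    obtain ⟨G, hGne, hGge, hGsum⟩ := hs (F.max' hFne + 1)
    exact hproper F G hFne hGne
      (fun i hi j hj => lt_of_le_of_lt (F.le_max' i hi) (hGge j hj))
      (hFsum.trans hGsum.symm)
  · rintro ⟨b, ⟨H, hHne, hHadj, hHsum⟩, hinter⟩
    -- for each m, find m' > m escaping all sums over subsets of range (m+1)
    have escape : ∀ s : S, ∃ n, s ∉ FStail b n := by
      intro s
      by_contra hc
      push_neg at hc
      have : s ∈ ⋂ n : ℕ, FStail b n := Set.mem_iInter.mpr hc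
      rw [hinter] at this
      exact this
    have key : ∀ m : ℕ, ∃ m', m < m' ∧
        ∀ F : Finset ℕ, F ⊆ Finset.range (m + 1) → F.Nonempty →
          ordsum b F ∉ FStail b m' := by
      intro m
      classical
      set E : Finset S :=
        (Finset.range (m + 1)).powerset.image (fun F => ordsum b F) with hE
      obtain ⟨n, hn⟩ := uniform_escape b E (fun s _ => escape s)
      refine ⟨max (m + 1) n, lt_of_lt_of_le (Nat.lt_succ_self m) (le_max_left _ _), ?_⟩
      intro F hFsub _ hmem
      exact hn (ordsum b F)
        (Finset.mem_image_of_mem _ (Finset.mem_powerset.mpr hFsub))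
        (FStail_antitone b (le_max_right (m + 1) n) hmem)
    choose g hg1 hg2 using key
    set f : ℕ → ℕ := fun k => Nat.rec 0 (fun _ prev => g prev) k with hfdef
    have hfsucc : ∀ k, f (k + 1) = g (f k) := fun k => rfl
    have hfmono : StrictMono f :=
      strictMono_nat_of_lt_succ (fun k => by rw [hfsucc]; exact hg1 (f k))
    set c : ℕ → S := fun k => b (f k) with hc
    refine ⟨c, ⟨fun k => H (f k), fun k => hHne _,
      fun k => finsetLT_of_lt H hHne hHadj _ _ (hfmono (Nat.lt_succ_self k)),
      fun k => hHsum (f k)⟩, ?_⟩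
    intro G₁ G₂ hG₁ hG₂ hlt heq
    set k := G₁.max' hG₁ with hk
    rw [ordsum_comp b f hfmono G₁ hG₁, ordsum_comp b f hfmono G₂ hG₂] at heq
    have h1 : G₁.map ⟨f, hfmono.injective⟩ ⊆ Finset.range (f k + 1) := by
      intro x hx
      rw [Finset.mem_map] at hx
      obtain ⟨i, hi, rfl⟩ := hx
      simpa using Nat.lt_succ_of_le (hfmono.monotone (G₁.le_max' i hi))
    have h2 : ordsum b (G₂.map ⟨f, hfmono.injective⟩) ∈ FStail b (f (k + 1)) := by
      refine ⟨G₂.map ⟨f, hfmono.injective⟩, Finset.map_nonempty.mpr hG₂, ?_, rfl⟩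
      intro x hx
      rw [Finset.mem_map] at hx
      obtain ⟨j, hj, rfl⟩ := hx
      exact hfmono.monotone (Nat.succ_le_of_lt (hlt k (G₁.max'_mem hG₁) j hj))
    rw [← heq] at h2
    rw [hfsucc] at h2
    exact hg2 (f k) _ h1 (Finset.map_nonempty.mpr hG₁) h2
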